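/- arXiv:1611.04132 — 2 statements merged into one kernel-verified Lean document; each statement's English description precedes it below -/
import Mathlib

section
/- Let K be a convex body in R^n and φ : K → (0,∞) continuous. For ε ∈ (0, min_{∂K} φ), set α = min_{∂K} φ − ε and β = max_{∂K} φ + ε. Then there exists δ₀ > 0 such that for all δ ∈ (0, δ₀), the weighted floating body satisfies K_{δ/α} ⊆ K_δ^φ ⊆ K_{δ/β}, where K_t denotes the ordinary (Lebesgue) convex floating body with parameter t. -/
open MeasureTheory Metric Set
open scoped RealInnerProductSpace ENNReal Topology

noncomputable section

/-- Euclidean space `ℝⁿ`. -/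
abbrev Euc (n : ℕ) := EuclideanSpace ℝ (Fin n)

/-- The weighted floating body `K_δ^φ`: the intersection of all closed half-spaces `H⁻`
whose complementary half-space `H⁺` cuts off `φ`-weighted measure at most `δ` from `K`.
Taking `φ ≡ 1` gives the ordinary (Lebesgue) convex floating body. -/
noncomputable def wfloat {n : ℕ} (K : Set (Euc n)) (φ : Euc n → ℝ) (δ : ℝ) : Set (Euc n) :=
  ⋂ v ∈ sphere (0 : Euc n) 1,
    ⋂ t ∈ {t : ℝ | (∫ y in K ∩ {y : Euc n | t ≤ ⟪v, y⟫}, φ y) ≤ δ},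
      {y : Euc n | ⟪v, y⟫ ≤ t}

lemma exists_frontier_mem_segment {E : Type*} [NormedAddCommGroup E] [NormedSpace ℝ E]
    {K : Set E} (hK : IsClosed K) {x z : E} (hx : x ∈ K) (hz : z ∉ K) :
    ∃ w ∈ frontier K, dist x w ≤ dist x z := by
  by_cases hxf : x ∈ frontier K
  · exact ⟨x, hxf, by simpa using dist_nonneg⟩
  have hxint : x ∈ interior K := by
    rw [hK.frontier_eq] at hxf
    simpa [hx] using hxf
  by_contra hcon
  push_neg at hcon
  have hsub : segment ℝ x z ⊆ interior K ∪ Kᶜ := by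
    intro w hw
    by_cases hwK : w ∈ K
    · left
      have hwf : w ∉ frontier K := by
        intro hwf
        have := hcon w hwf
        have h2 := dist_add_dist_of_mem_segment hw
        have : (0:ℝ) ≤ dist w z := dist_nonneg
        linarith
      rw [hK.frontier_eq] at hwf
      simpa [hwK] using hwf
    · exact Or.inr hwK
  have hconn : IsPreconnected (segment ℝ x z) := (convex_segment x z).isPreconnected
  obtain ⟨y, _, hy1, hy2⟩ := hconn (interior K) Kᶜ isOpen_interior hK.isOpen_compl hsub
    ⟨x, left_mem_segment ℝ x z, hxint⟩ ⟨z, right_mem_segment ℝ x z, hz⟩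
  exact hy2 (interior_subset hy1)

/-- Sandwiching the weighted floating body between ordinary
floating bodies: with `α = min_{∂K} φ − ε`, `β = max_{∂K} φ + ε`, there is `δ₀ > 0`
such that `K_{δ/α} ⊆ K_δ^φ ⊆ K_{δ/β}` for all `δ ∈ (0, δ₀)`. -/
theorem weighted_floating_body_sandwich {n : ℕ} (K : Set (Euc n))
    (hKcomp : IsCompact K) (hKconv : Convex ℝ K) (hKint : (interior K).Nonempty)
    (φ : Euc n → ℝ) (hφcont : ContinuousOn φ K) (hφpos : ∀ x ∈ K, 0 < φ x)
    (ε : ℝ) (hε : 0 < ε) (hε' : ε < sInf (φ '' frontier K)) :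
    ∃ δ₀ > 0, ∀ δ ∈ Ioo (0 : ℝ) δ₀,
      wfloat K (fun _ => 1) (δ / (sInf (φ '' frontier K) - ε)) ⊆ wfloat K φ δ ∧
      wfloat K φ δ ⊆ wfloat K (fun _ => 1) (δ / (sSup (φ '' frontier K) + ε)) := by
  rcases eq_empty_or_nonempty (frontier K) with hfr | hfr
  · exfalso
    rw [hfr, image_empty, Real.sInf_empty] at hε'
    linarith
  have hKcl : IsClosed K := hKcomp.isClosed
  have hfrK : frontier K ⊆ K := hKcl.frontier_subset
  have hfrcomp : IsCompact (frontier K) := hKcomp.of_isClosed_subset isClosed_frontier hfrK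
  have himg : IsCompact (φ '' frontier K) := hfrcomp.image_of_continuousOn (hφcont.mono hfrK)
  have himgne : (φ '' frontier K).Nonempty := hfr.image φ
  set m := sInf (φ '' frontier K) with hmdef
  set M := sSup (φ '' frontier K) with hMdef
  have hmM : m ≤ M := csInf_le_csSup himgne himg.bddBelow himg.bddAbove
  have hαpos : 0 < m - ε := by linarith
  have hβpos : 0 < M + ε := by linarith
  -- minimum of φ on K
  have hKne : K.Nonempty := hKint.mono interior_subset
  obtain ⟨x0, hx0K, hx0min⟩ := hKcomp.exists_isMinOn hKne hφcont
  have hc : 0 < φ x0 := hφpos x0 hx0K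
  have hcle : ∀ x ∈ K, φ x0 ≤ φ x := fun x hx => hx0min hx
  set c := φ x0 with hcdef
  -- uniform continuity
  obtain ⟨η, hη, hunif⟩ := (Metric.uniformContinuousOn_iff.mp
    (hKcomp.uniformContinuousOn_of_continuous hφcont)) ε hε
  set V := (volume (ball (0 : Euc n) (η/2))).toReal with hVdef
  have hVpos : 0 < V := ENNReal.toReal_pos
    (measure_ball_pos volume 0 (by positivity)).ne' measure_ball_lt_top.ne
  -- measurability and integrability of caps
  have hcapmeas : ∀ (v : Euc n) (t : ℝ), MeasurableSet (K ∩ {y : Euc n | t ≤ ⟪v, y⟫}) := by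
    intro v t
    exact hKcl.measurableSet.inter
      ((isClosed_le continuous_const (continuous_const.inner continuous_id)).measurableSet)
  have hcapfin : ∀ (v : Euc n) (t : ℝ), volume (K ∩ {y : Euc n | t ≤ ⟪v, y⟫}) ≠ ∞ :=
    fun v t => ((measure_mono inter_subset_left).trans_lt hKcomp.measure_lt_top).ne
  have hcapint : ∀ (v : Euc n) (t : ℝ), IntegrableOn φ (K ∩ {y : Euc n | t ≤ ⟪v, y⟫}) :=
    fun v t => (hφcont.integrableOn_compact hKcomp).mono_set inter_subset_left
  -- key geometric lemma: small caps lie near the boundary, where m-ε < φ < M+ε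
  have key : ∀ v ∈ sphere (0 : Euc n) 1, ∀ t : ℝ,
      (volume (K ∩ {y : Euc n | t ≤ ⟪v, y⟫})).toReal < V →
      ∀ x ∈ K ∩ {y : Euc n | t ≤ ⟪v, y⟫}, m - ε < φ x ∧ φ x < M + ε := by
    intro v hv t hvol x hx
    obtain ⟨hxK, hxt⟩ := hx
    have hvnorm : ‖v‖ = 1 := mem_sphere_zero_iff_norm.mp hv
    have hball : ¬ ball x η ⊆ K := by
      intro hsub
      set p := x + (η/2) • v with hpdef
      have hsub2 : ball p (η/2) ⊆ K ∩ {y : Euc n | t ≤ ⟪v, y⟫} := by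
        intro y hy
        have hdy : dist y p < η/2 := mem_ball.mp hy
        constructor
        · apply hsub
          rw [mem_ball]
          have h2 : dist p x = η/2 := by
            rw [hpdef, dist_eq_norm, add_sub_cancel_left, norm_smul, hvnorm]
            simp [abs_of_pos, hη]
          calc dist y x ≤ dist y p + dist p x := dist_triangle _ _ _
            _ < η/2 + η/2 := by rw [h2]; linarith
            _ = η := by ring
        · show t ≤ ⟪v, y⟫
          have hdecomp : ⟪v, y⟫ = ⟪v, p⟫ + ⟪v, y - p⟫ := by
            rw [← inner_add_right]
            congr 1
            abel
          have hvp : ⟪v, p⟫ = ⟪v, x⟫ + η/2 := by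
            rw [hpdef, inner_add_right, real_inner_smul_right,
              real_inner_self_eq_norm_sq, hvnorm]
            ring
          have hcs : -(η/2) ≤ ⟪v, y - p⟫ := by
            have h1 : |⟪v, y - p⟫| ≤ ‖v‖ * ‖y - p‖ := abs_real_inner_le_norm v (y - p)
            have h2 : ‖y - p‖ ≤ η/2 := by
              rw [← dist_eq_norm]; exact hdy.le
            rw [hvnorm, one_mul] at h1
            have := abs_le.mp (h1.trans h2)
            linarith [this.1]
          have hxt' : t ≤ ⟪v, x⟫ := hxt
          rw [hdecomp, hvp]
          linarith
      have hle : volume (ball p (η/2)) ≤ volume (K ∩ {y : Euc n | t ≤ ⟪v, y⟫}) :=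
        measure_mono hsub2
      rw [Measure.addHaar_ball_center] at hle
      have : V ≤ (volume (K ∩ {y : Euc n | t ≤ ⟪v, y⟫})).toReal :=
        ENNReal.toReal_le_toReal measure_ball_lt_top.ne (hcapfin v t) |>.mpr hle
      linarith
    obtain ⟨z, hz1, hz2⟩ := not_subset.mp hball
    obtain ⟨w, hwf, hwd⟩ := exists_frontier_mem_segment hKcl hxK hz2
    have hdxw : dist x w < η := lt_of_le_of_lt hwd (mem_ball'.mp hz1)
    have hphi : dist (φ x) (φ w) < ε := hunif x hxK w (hfrK hwf) hdxw
    rw [Real.dist_eq] at hphi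
    have habs := abs_lt.mp hphi
    have hmw : m ≤ φ w := csInf_le himg.bddBelow ⟨w, hwf, rfl⟩
    have hwM : φ w ≤ M := le_csSup himg.bddAbove ⟨w, hwf, rfl⟩
    constructor <;> linarith [habs.1, habs.2]
  refine ⟨min c (M + ε) * V, by positivity, fun δ hδ => ?_⟩
  obtain ⟨hδ0, hδ1⟩ := hδ
  constructor
  · -- K_{δ/α} ⊆ K_δ^φ
    intro x hx
    simp only [wfloat, mem_iInter, mem_setOf_eq] at hx ⊢
    intro v hv t ht
    apply hx v hv t
    set S := K ∩ {y : Euc n | t ≤ ⟪v, y⟫} with hSdef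
    have hge : c * (volume S).toReal ≤ ∫ y in S, φ y :=
      setIntegral_ge_of_const_le_real (hcapmeas v t) (hcapfin v t)
        (fun y hy => hcle y hy.1) (hcapint v t)
    have hvolle : (volume S).toReal ≤ δ / c := by
      rw [le_div_iff₀ hc]
      calc (volume S).toReal * c = c * (volume S).toReal := mul_comm _ _
        _ ≤ ∫ y in S, φ y := hge
        _ ≤ δ := ht
    have hvolV : (volume S).toReal < V := by
      have h1 : δ / c < V := by
        rw [div_lt_iff₀ hc]
        calc δ < min c (M + ε) * V := hδ1
          _ ≤ c * V := by
              apply mul_le_mul_of_nonneg_right (min_le_left _ _) hVpos.le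
          _ = V * c := mul_comm _ _
      linarith
    have hge2 : (m - ε) * (volume S).toReal ≤ ∫ y in S, φ y :=
      setIntegral_ge_of_const_le_real (hcapmeas v t) (hcapfin v t)
        (fun y hy => (key v hv t hvolV y hy).1.le) (hcapint v t)
    have : (volume S).toReal ≤ δ / (m - ε) := by
      rw [le_div_iff₀ hαpos]
      calc (volume S).toReal * (m - ε) = (m - ε) * (volume S).toReal := mul_comm _ _
        _ ≤ ∫ y in S, φ y := hge2
        _ ≤ δ := ht
    calc (∫ _ in S, (1:ℝ)) = (volume S).toReal := by simp; rfl
      _ ≤ δ / (m - ε) := this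
  · -- K_δ^φ ⊆ K_{δ/β}
    intro x hx
    simp only [wfloat, mem_iInter, mem_setOf_eq] at hx ⊢
    intro v hv t ht
    apply hx v hv t
    set S := K ∩ {y : Euc n | t ≤ ⟪v, y⟫} with hSdef
    have hvolle : (volume S).toReal ≤ δ / (M + ε) := by
      calc (volume S).toReal = ∫ _ in S, (1:ℝ) := by simp; rfl
        _ ≤ δ / (M + ε) := ht
    have hvolV : (volume S).toReal < V := by
      have h1 : δ / (M + ε) < V := by
        rw [div_lt_iff₀ hβpos]
        calc δ < min c (M + ε) * V := hδ1
          _ ≤ (M + ε) * V := mul_le_mul_of_nonneg_right (min_le_right _ _) hVpos.le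
          _ = V * (M + ε) := mul_comm _ _
      linarith
    have hle : (∫ y in S, φ y) ≤ ∫ _ in S, (M + ε) :=
      setIntegral_mono_on (hcapint v t)
        (integrableOn_const (hcapfin v t))
        (hcapmeas v t) (fun y hy => (key v hv t hvolV y hy).2.le)
    calc (∫ y in S, φ y) ≤ ∫ _ in S, (M + ε) := hle
      _ = (volume S).toReal * (M + ε) := by rw [setIntegral_const]; simp [smul_eq_mul]; exact Or.inl rfl
      _ ≤ (δ / (M + ε)) * (M + ε) := mul_le_mul_of_nonneg_right hvolle hβpos.le
      _ = δ := div_mul_cancel₀ δ hβpos.ne'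
end
end

section
/- Let K be a convex body in R^n and φ : K → (0,∞) continuous. For v ∈ S^{n−1} and δ > 0 define t_δ(v) implicitly by Φ(K ∩ H⁺(v, t_δ(v))) = δ, where H⁺(v,t) = {y : y·v ≥ t} and Φ(A) = ∫_A φ. Then there exists δ₀ > 0 such that (δ,v) ↦ t_δ(v) is continuous on [0,δ₀) × S^{n−1} with t₀(v) = h_K(v), and the weighted floating body satisfies K_δ^φ = ⋂_{v ∈ S^{n−1}} H⁻(v, t_δ(v)). -/
open MeasureTheory Metric Set
open scoped RealInnerProductSpace ENNReal Topology

noncomputable section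

/-- The support function `h_K(v) = max {v·x : x ∈ K}`. -/
noncomputable def suppFn {n : ℕ} (K : Set (Euc n)) (v : Euc n) : ℝ :=
  sSup ((fun x => ⟪v, x⟫) '' K)

namespace WFBaux

variable {n : ℕ}

noncomputable def F (K : Set (Euc n)) (φ : Euc n → ℝ) (v : Euc n) (s : ℝ) : ℝ :=
  ∫ y in K ∩ {y : Euc n | s ≤ ⟪v, y⟫}, φ y

lemma measurable_half (v : Euc n) (s : ℝ) : MeasurableSet {y : Euc n | s ≤ ⟪v, y⟫} :=
  (isClosed_le continuous_const (continuous_const.inner continuous_id)).measurableSet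

lemma hyperplane_null {v : Euc n} (hv : v ≠ 0) (c : ℝ) :
    (volume : Measure (Euc n)) {y : Euc n | ⟪v, y⟫ = c} = 0 := by
  have hconv : Convex ℝ {y : Euc n | c ≤ ⟪v, y⟫} := by
    intro y hy z hz α β hα hβ hαβ
    simp only [mem_setOf_eq] at *
    have h : ⟪v, α • y + β • z⟫ = α * ⟪v, y⟫ + β * ⟪v, z⟫ := by
      rw [inner_add_right, real_inner_smul_right, real_inner_smul_right]
    rw [h]
    have hsum : α * c + β * c = c := by rw [← add_mul, hαβ, one_mul]
    have h1 := mul_le_mul_of_nonneg_left hy hα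
    have h2 := mul_le_mul_of_nonneg_left hz hβ
    linarith
  refine measure_mono_null ?_ (Convex.addHaar_frontier volume hconv)
  intro y hy
  simp only [mem_setOf_eq] at hy
  rw [frontier, mem_diff]
  have hvpos : (0:ℝ) < ‖v‖ := norm_pos_iff.2 hv
  constructor
  · exact subset_closure (by simp only [mem_setOf_eq]; exact hy.ge)
  · intro hmem
    obtain ⟨ε, hε, hball⟩ := Metric.isOpen_iff.1 isOpen_interior y hmem
    set w := y - (ε / (2 * ‖v‖)) • v with hw
    have hwball : w ∈ ball y ε := by
      rw [mem_ball, dist_eq_norm, hw]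
      have : y - (y - (ε / (2 * ‖v‖)) • v) = (ε / (2 * ‖v‖)) • v := by abel
      rw [show w - y = -((ε / (2 * ‖v‖)) • v) by rw [hw]; abel, norm_neg, norm_smul,
        Real.norm_eq_abs, abs_of_pos (by positivity)]
      have h2 : ε / (2 * ‖v‖) * ‖v‖ = ε / 2 := by field_simp
      rw [h2]; linarith
    have hws' : w ∈ {y : Euc n | c ≤ ⟪v, y⟫} := interior_subset (hball hwball)
    have hws : c ≤ ⟪v, w⟫ := hws'
    have hval : ⟪v, w⟫ = c - (ε / (2 * ‖v‖)) * (‖v‖ * ‖v‖) := by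
      rw [hw, inner_sub_right, real_inner_smul_right, hy, real_inner_self_eq_norm_mul_norm]
    rw [hval] at hws
    have hpos : 0 < ε / (2 * ‖v‖) * (‖v‖ * ‖v‖) := by positivity
    linarith

section
variable {n : ℕ} {K : Set (Euc n)} {φ : Euc n → ℝ}

lemma F_nonneg (hK : MeasurableSet K) (hφpos : ∀ x ∈ K, 0 < φ x) (v : Euc n) (s : ℝ) :
    0 ≤ F K φ v s :=
  setIntegral_nonneg (hK.inter (measurable_half v s))
    (fun y hy => (hφpos y hy.1).le)

lemma F_mono (hKcomp : IsCompact K) (hφcont : ContinuousOn φ K) (hφpos : ∀ x ∈ K, 0 < φ x)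
    (v : Euc n) {s s' : ℝ} (h : s ≤ s') : F K φ v s' ≤ F K φ v s := by
  have hint : IntegrableOn φ K := hφcont.integrableOn_compact hKcomp
  refine setIntegral_mono_set (hint.mono_set inter_subset_left) ?_ ?_
  · exact (ae_restrict_mem ((hKcomp.isClosed.measurableSet).inter (measurable_half v s))).mono
      fun y hy => (hφpos y hy.1).le
  · exact HasSubset.Subset.eventuallyLE (inter_subset_inter_right K
      (fun y (hy : y ∈ {y : Euc n | s' ≤ ⟪v, y⟫}) => (le_trans h hy : y ∈ {y : Euc n | s ≤ ⟪v, y⟫})))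

lemma F_zero {v : Euc n} (hv : v ≠ 0) {s : ℝ} (hs : ∀ y ∈ K, ⟪v, y⟫ ≤ s) :
    F K φ v s = 0 := by
  have hnull : volume (K ∩ {y : Euc n | s ≤ ⟪v, y⟫}) = 0 := by
    refine measure_mono_null (fun y hy => ?_) (hyperplane_null hv s)
    exact le_antisymm (hs y hy.1) hy.2
  unfold F
  rw [Measure.restrict_eq_zero.2 hnull, integral_zero_measure]

lemma F_total {v : Euc n} {s : ℝ} (hs : ∀ y ∈ K, s ≤ ⟪v, y⟫) :
    F K φ v s = ∫ y in K, φ y := by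
  unfold F
  have h : K ∩ {y : Euc n | s ≤ ⟪v, y⟫} = K :=
    inter_eq_self_of_subset_left (fun y hy => hs y hy)
  rw [h]

lemma F_cont (hKcomp : IsCompact K) (hφcont : ContinuousOn φ K)
    {p₀ : Euc n × ℝ} (hv : p₀.1 ≠ 0) :
    ContinuousAt (fun p : Euc n × ℝ => F K φ p.1 p.2) p₀ := by
  have hint : IntegrableOn φ K := hφcont.integrableOn_compact hKcomp
  have hrw : ∀ p : Euc n × ℝ,
      F K φ p.1 p.2 = ∫ y in K, ({y : Euc n | p.2 ≤ ⟪p.1, y⟫}).indicator φ y := fun p =>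
    (setIntegral_indicator (measurable_half _ _)).symm
  unfold ContinuousAt
  simp only [hrw]
  apply tendsto_integral_filter_of_dominated_convergence (fun y => ‖φ y‖)
  · exact Filter.Eventually.of_forall fun p =>
      (hint.aestronglyMeasurable).indicator (measurable_half _ _)
  · exact Filter.Eventually.of_forall fun p =>
      Filter.Eventually.of_forall fun y => norm_indicator_le_norm_self φ y
  · exact hint.norm
  · have hnull : (volume.restrict K) {y : Euc n | ⟪p₀.1, y⟫ = p₀.2} = 0 :=
      le_antisymm (le_trans (Measure.restrict_le_self _) (hyperplane_null hv _).le)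
        (zero_le)
    have hae : ∀ᵐ y ∂volume.restrict K, ⟪p₀.1, y⟫ ≠ p₀.2 := by
      rw [ae_iff]
      convert hnull using 2
      ext y; simp
    filter_upwards [hae] with y hy
    have hc : Continuous fun p : Euc n × ℝ => ⟪p.1, y⟫ - p.2 :=
      (continuous_fst.inner continuous_const).sub continuous_snd
    rcases lt_or_gt_of_ne hy with h | h
    · have hev : ∀ᶠ p : Euc n × ℝ in 𝓝 p₀, ⟪p.1, y⟫ < p.2 := by
        have := (hc.tendsto p₀).eventually (eventually_lt_nhds
          (show ⟪p₀.1, y⟫ - p₀.2 < 0 by linarith))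
        filter_upwards [this] with p hp
        linarith
      rw [Set.indicator_of_notMem (by simpa using not_le.2 h)]
      refine Filter.Tendsto.congr' ?_ tendsto_const_nhds
      filter_upwards [hev] with p hp
      exact (Set.indicator_of_notMem (by simpa using not_le.2 hp) φ).symm
    · have hev : ∀ᶠ p : Euc n × ℝ in 𝓝 p₀, p.2 ≤ ⟪p.1, y⟫ := by
        have := (hc.tendsto p₀).eventually (eventually_gt_nhds
          (show (0:ℝ) < ⟪p₀.1, y⟫ - p₀.2 by linarith))
        filter_upwards [this] with p hp
        linarith
      rw [Set.indicator_of_mem (by simpa using h.le)]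
      refine Filter.Tendsto.congr' ?_ tendsto_const_nhds
      filter_upwards [hev] with p hp
      exact (Set.indicator_of_mem (by simpa using hp) φ).symm

end
section
variable {n : ℕ} {K : Set (Euc n)} {φ : Euc n → ℝ}

lemma exists_interior_gt (hKconv : Convex ℝ K) (hKint : (interior K).Nonempty)
    {v : Euc n} {w : Euc n} (hw : w ∈ K) {c : ℝ} (hc : c < ⟪v, w⟫) :
    ∃ x ∈ interior K, c < ⟪v, x⟫ := by
  obtain ⟨z, hz⟩ := hKint
  have hcont : Continuous (fun θ : ℝ => θ * ⟪v, z⟫ + (1 - θ) * ⟪v, w⟫) := by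
    apply Continuous.add
    · exact continuous_id.mul continuous_const
    · exact (continuous_const.sub continuous_id).mul continuous_const
  have h0 : (0:ℝ) * ⟪v, z⟫ + (1 - 0) * ⟪v, w⟫ = ⟪v, w⟫ := by ring
  have hev : ∀ᶠ θ in 𝓝[>] (0:ℝ), c < θ * ⟪v, z⟫ + (1 - θ) * ⟪v, w⟫ := by
    refine Filter.Eventually.filter_mono nhdsWithin_le_nhds ?_
    have := (hcont.tendsto 0).eventually (eventually_gt_nhds (by rw [h0]; exact hc))
    exact this
  have hmem : ∀ᶠ θ in 𝓝[>] (0:ℝ), θ ∈ Ioc (0:ℝ) 1 := Ioc_mem_nhdsGT_of_mem ⟨le_rfl, one_pos⟩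
  obtain ⟨θ, hθ1, hθ2⟩ := (hev.and hmem).exists
  refine ⟨θ • z + (1 - θ) • w, ?_, ?_⟩
  · exact hKconv.combo_interior_closure_mem_interior hz (subset_closure hw) hθ2.1
      (by linarith [hθ2.2]) (by ring)
  · rwa [inner_add_right, real_inner_smul_right, real_inner_smul_right]

lemma exists_interior_between (hKcomp : IsCompact K) (hKconv : Convex ℝ K)
    (hKint : (interior K).Nonempty) {v : Euc n} {a b : ℝ}
    (ha : a < suppFn K v) (hb : sInf ((fun x => ⟪v, x⟫) '' K) < b) (hab : a < b) :
    ∃ x ∈ interior K, a < ⟪v, x⟫ ∧ ⟪v, x⟫ < b := by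
  have hKne : K.Nonempty := hKint.mono interior_subset
  obtain ⟨_, ⟨p, hpK, rfl⟩, hp⟩ := exists_lt_of_lt_csSup (hKne.image _) ha
  obtain ⟨_, ⟨q, hqK, rfl⟩, hq⟩ := exists_lt_of_csInf_lt (hKne.image _) hb
  obtain ⟨x₁, hx₁, hax₁⟩ := exists_interior_gt hKconv hKint hpK hp
  have hq' : ⟪-v, q⟫ > -b := by rw [inner_neg_left]; linarith
  obtain ⟨x₂, hx₂, hx₂b'⟩ := exists_interior_gt hKconv hKint (v := -v) (c := -b) hqK hq'
  have hx₂b : ⟪v, x₂⟫ < b := by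
    rw [inner_neg_left] at hx₂b'; linarith
  by_cases hcase : ⟪v, x₁⟫ < b
  · exact ⟨x₁, hx₁, hax₁, hcase⟩
  push_neg at hcase
  set c := (max a ⟪v, x₂⟫ + b) / 2 with hc
  have hmaxb : max a ⟪v, x₂⟫ < b := max_lt hab hx₂b
  have hca : a < c := by
    have : a ≤ max a ⟪v, x₂⟫ := le_max_left _ _
    rw [hc]; linarith
  have hcb : c < b := by rw [hc]; linarith
  have hcx₂ : ⟪v, x₂⟫ < c := by
    have : ⟪v, x₂⟫ ≤ max a ⟪v, x₂⟫ := le_max_right _ _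
    rw [hc]; linarith
  have hcx₁ : c ≤ ⟪v, x₁⟫ := le_trans hcb.le hcase
  have hgc : Continuous (fun θ : ℝ => ⟪v, θ • x₁ + (1 - θ) • x₂⟫) := by
    exact continuous_const.inner ((continuous_id.smul continuous_const).add
      ((continuous_const.sub continuous_id).smul continuous_const))
  have hivt := intermediate_value_Icc (zero_le_one (α := ℝ)) hgc.continuousOn
  simp only [zero_smul, one_smul, sub_zero, sub_self, zero_add, add_zero] at hivt
  obtain ⟨θ, hθ, hθc⟩ := hivt ⟨hcx₂.le, hcx₁⟩
  refine ⟨θ • x₁ + (1 - θ) • x₂, ?_, ?_, ?_⟩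
  · exact hKconv.interior hx₁ hx₂ hθ.1 (by linarith [hθ.2]) (by ring)
  · simp only at hθc; rw [hθc]; exact hca
  · simp only at hθc; rw [hθc]; exact hcb

lemma F_slab_pos (hKcomp : IsCompact K) (hKconv : Convex ℝ K)
    (hKint : (interior K).Nonempty) (hφcont : ContinuousOn φ K) (hφpos : ∀ x ∈ K, 0 < φ x)
    {v : Euc n} {a b : ℝ} (ha : a < suppFn K v)
    (hb : sInf ((fun x => ⟪v, x⟫) '' K) < b) (hab : a < b) :
    F K φ v b < F K φ v a := by
  have hKmeas : MeasurableSet K := hKcomp.isClosed.measurableSet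
  have hint : IntegrableOn φ K := hφcont.integrableOn_compact hKcomp
  obtain ⟨x, hxint, hax, hxb⟩ := exists_interior_between hKcomp hKconv hKint ha hb hab
  have hxK : x ∈ K := interior_subset hxint
  have hnx : K ∈ 𝓝 x := mem_interior_iff_mem_nhds.1 hxint
  have hevφ : ∀ᶠ y in 𝓝 x, φ x / 2 < φ y := by
    have h1 : ContinuousWithinAt φ K x := hφcont x hxK
    rw [ContinuousWithinAt, nhdsWithin_eq_nhds.2 hnx] at h1
    exact h1.eventually (eventually_gt_nhds (by linarith [hφpos x hxK]))
  have hfc : Continuous (fun y : Euc n => ⟪v, y⟫) := continuous_const.inner continuous_id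
  have hopen : ∀ᶠ y in 𝓝 x, y ∈ interior K ∧ a < ⟪v, y⟫ ∧ ⟪v, y⟫ < b := by
    have hS : IsOpen (interior K ∩ ({y : Euc n | a < ⟪v, y⟫} ∩ {y : Euc n | ⟪v, y⟫ < b})) :=
      isOpen_interior.inter ((isOpen_lt continuous_const hfc).inter
        (isOpen_lt hfc continuous_const))
    have hxS : x ∈ interior K ∩ ({y : Euc n | a < ⟪v, y⟫} ∩ {y : Euc n | ⟪v, y⟫ < b}) :=
      ⟨hxint, hax, hxb⟩
    filter_upwards [hS.mem_nhds hxS] with y hy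
    exact ⟨hy.1, hy.2.1, hy.2.2⟩
  obtain ⟨r, hr, hball⟩ := Metric.eventually_nhds_iff_ball.1 (hevφ.and hopen)
  set A := K ∩ {y : Euc n | a ≤ ⟪v, y⟫} with hA
  set B := K ∩ {y : Euc n | b ≤ ⟪v, y⟫} with hB
  have hBA : B ⊆ A := inter_subset_inter_right K (fun y hy => le_trans hab.le hy)
  have hintA : IntegrableOn φ A := hint.mono_set inter_subset_left
  have hdiff : ∫ y in A \ B, φ y = F K φ v a - F K φ v b :=
    integral_diff (hKmeas.inter (measurable_half v b)) hintA hBA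
  have hballsub : ball x r ⊆ A \ B := by
    intro y hy
    obtain ⟨h1, h2, h3, h4⟩ := hball y hy
    exact ⟨⟨interior_subset h2, h3.le⟩, fun hyB => absurd hyB.2 (not_le.2 h4)⟩
  have hlow : φ x / 2 * (volume (ball x r)).toReal ≤ ∫ y in ball x r, φ y := by
    have := setIntegral_ge_of_const_le_real measurableSet_ball measure_ball_lt_top.ne
      (fun y hy => (hball y hy).1.le)
      (hint.mono_set fun y hy => interior_subset (hball y hy).2.1)
    exact this
  have hmonoI : ∫ y in ball x r, φ y ≤ ∫ y in A \ B, φ y := by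
    refine setIntegral_mono_set (hintA.mono_set diff_subset) ?_
      (HasSubset.Subset.eventuallyLE hballsub)
    exact (ae_restrict_mem ((hKmeas.inter (measurable_half v a)).diff
      (hKmeas.inter (measurable_half v b)))).mono fun y hy => (hφpos y hy.1.1).le
  have hpos : 0 < φ x / 2 * (volume (ball x r)).toReal :=
    mul_pos (by linarith [hφpos x hxK])
      (ENNReal.toReal_pos (measure_ball_pos volume x hr).ne' measure_ball_lt_top.ne)
  linarith [hdiff ▸ hmonoI]

end
end WFBaux

/-- For a convex body `K` and continuous `φ > 0` on `K`, there are
`δ₀ > 0` and a cut-off function `t(δ, v)` with `Φ(K ∩ H⁺(v, t(δ,v))) = δ`, jointly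
continuous on `[0, δ₀) × S^{n−1}`, with `t(0, v) = h_K(v)`, and the weighted floating
body satisfies `K_δ^φ = ⋂_{v ∈ S^{n−1}} H⁻(v, t(δ, v))` for `δ ∈ (0, δ₀)`. -/
theorem weighted_floating_body_cutoff_parametrization {n : ℕ} (K : Set (Euc n))
    (hKcomp : IsCompact K) (hKconv : Convex ℝ K) (hKint : (interior K).Nonempty)
    (φ : Euc n → ℝ) (hφcont : ContinuousOn φ K) (hφpos : ∀ x ∈ K, 0 < φ x) :
    ∃ δ₀ > 0, ∃ t : ℝ × Euc n → ℝ,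
      ContinuousOn t (Ico (0 : ℝ) δ₀ ×ˢ sphere (0 : Euc n) 1) ∧
      (∀ v ∈ sphere (0 : Euc n) 1, t (0, v) = suppFn K v) ∧
      (∀ δ ∈ Ioo (0 : ℝ) δ₀, ∀ v ∈ sphere (0 : Euc n) 1,
        (∫ y in K ∩ {y : Euc n | t (δ, v) ≤ ⟪v, y⟫}, φ y) = δ) ∧
      (∀ δ ∈ Ioo (0 : ℝ) δ₀,
        wfloat K φ δ = ⋂ v ∈ sphere (0 : Euc n) 1, {y : Euc n | ⟪v, y⟫ ≤ t (δ, v)}) := by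
  classical
  have hKne : K.Nonempty := hKint.mono interior_subset
  obtain ⟨y₀, hy₀⟩ := hKne
  have hKne : K.Nonempty := ⟨y₀, hy₀⟩
  have hKmeas : MeasurableSet K := hKcomp.isClosed.measurableSet
  have hint : IntegrableOn φ K := hφcont.integrableOn_compact hKcomp
  obtain ⟨R, hR⟩ := hKcomp.isBounded.subset_closedBall 0
  have hnormR : ∀ y ∈ K, ‖y‖ ≤ R := fun y hy => by
    have := hR hy; rwa [mem_closedBall, dist_zero_right] at this
  have hR0 : 0 ≤ R := le_trans (norm_nonneg _) (hnormR _ hy₀)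
  have habs : ∀ v : Euc n, ‖v‖ = 1 → ∀ y ∈ K, |⟪v, y⟫| ≤ R := by
    intro v hv y hy
    calc |⟪v, y⟫| ≤ ‖v‖ * ‖y‖ := abs_real_inner_le_norm _ _
    _ = ‖y‖ := by rw [hv, one_mul]
    _ ≤ R := hnormR y hy
  have hbddA : ∀ v : Euc n, BddAbove ((fun x => ⟪v, x⟫) '' K) := fun v =>
    (hKcomp.image (continuous_const.inner continuous_id)).bddAbove
  have hbddB : ∀ v : Euc n, BddBelow ((fun x => ⟪v, x⟫) '' K) := fun v =>
    (hKcomp.image (continuous_const.inner continuous_id)).bddBelow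
  have hsupp_le : ∀ v : Euc n, ∀ y ∈ K, ⟪v, y⟫ ≤ suppFn K v := fun v y hy =>
    le_csSup (hbddA v) ⟨y, hy, rfl⟩
  have hinf_le : ∀ v : Euc n, ∀ y ∈ K, sInf ((fun x => ⟪v, x⟫) '' K) ≤ ⟪v, y⟫ :=
    fun v y hy => csInf_le (hbddB v) ⟨y, hy, rfl⟩
  have hm_le_h : ∀ v : Euc n, sInf ((fun x => ⟪v, x⟫) '' K) ≤ suppFn K v := fun v =>
    le_trans (hinf_le v y₀ hy₀) (hsupp_le v y₀ hy₀)
  set δ₀ := ∫ y in K, φ y with hδ₀def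
  -- positivity of δ₀
  have hδ₀pos : 0 < δ₀ := by
    obtain ⟨x, hx⟩ := hKint
    have hxK : x ∈ K := interior_subset hx
    have hnx : K ∈ 𝓝 x := mem_interior_iff_mem_nhds.1 hx
    have hevφ : ∀ᶠ y in 𝓝 x, φ x / 2 < φ y := by
      have h1 : ContinuousWithinAt φ K x := hφcont x hxK
      rw [ContinuousWithinAt, nhdsWithin_eq_nhds.2 hnx] at h1
      exact h1.eventually (eventually_gt_nhds (by linarith [hφpos x hxK]))
    obtain ⟨r, hr, hball⟩ := Metric.eventually_nhds_iff_ball.1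
      (hevφ.and (Filter.eventually_of_mem hnx fun y h => h))
    have h1 : φ x / 2 * (volume (ball x r)).toReal ≤ ∫ y in ball x r, φ y := by
      have := setIntegral_ge_of_const_le_real measurableSet_ball measure_ball_lt_top.ne
        (fun y hy => (hball y hy).1.le) (hint.mono_set fun y hy => (hball y hy).2)
      exact this
    have h2 : ∫ y in ball x r, φ y ≤ δ₀ := by
      refine setIntegral_mono_set hint
        ((ae_restrict_mem hKmeas).mono fun y hy => (hφpos y hy).le)
        (HasSubset.Subset.eventuallyLE fun y hy => (hball y hy).2)
    have h3 : 0 < φ x / 2 * (volume (ball x r)).toReal :=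
      mul_pos (by linarith [hφpos x hxK])
        (ENNReal.toReal_pos (measure_ball_pos volume x hr).ne' measure_ball_lt_top.ne)
    linarith
  set tf : ℝ × Euc n → ℝ := fun p => sInf {s : ℝ | WFBaux.F K φ p.2 s ≤ p.1} with htf
  have hvne : ∀ v : Euc n, ‖v‖ = 1 → v ≠ 0 := by
    intro v hv h0; rw [h0, norm_zero] at hv; exact zero_ne_one hv
  have hF0 : ∀ v : Euc n, ‖v‖ = 1 → ∀ s, suppFn K v ≤ s → WFBaux.F K φ v s = 0 := by
    intro v hv s hs
    exact WFBaux.F_zero (hvne v hv) (fun y hy => le_trans (hsupp_le v y hy) hs)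
  have hFtot : ∀ v : Euc n, ‖v‖ = 1 → ∀ s, s ≤ -R → WFBaux.F K φ v s = δ₀ := by
    intro v hv s hs
    exact WFBaux.F_total (fun y hy => le_trans hs
      (by linarith [(abs_le.1 (habs v hv y hy)).1]))
  have hFcont1 : ∀ v : Euc n, ‖v‖ = 1 → Continuous (fun s => WFBaux.F K φ v s) := by
    intro v hv
    rw [continuous_iff_continuousAt]
    intro s
    have h := WFBaux.F_cont (K := K) (φ := φ) hKcomp hφcont
      (p₀ := (v, s)) (hvne v hv)
    exact h.comp ((continuous_const.prodMk continuous_id).continuousAt)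
  have hmemt : ∀ v : Euc n, ‖v‖ = 1 → ∀ δ : ℝ, 0 ≤ δ →
      suppFn K v ∈ {s : ℝ | WFBaux.F K φ v s ≤ δ} := by
    intro v hv δ hδ
    simp only [mem_setOf_eq]
    rw [hF0 v hv _ le_rfl]; exact hδ
  have hlbt : ∀ v : Euc n, ‖v‖ = 1 → ∀ δ : ℝ, δ < δ₀ →
      ∀ s ∈ {s : ℝ | WFBaux.F K φ v s ≤ δ}, -R ≤ s := by
    intro v hv δ hδ s hs
    by_contra hcon
    push_neg at hcon
    have h1 := hFtot v hv s (by linarith)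
    simp only [mem_setOf_eq] at hs
    rw [h1] at hs; linarith
  have hbddt : ∀ v : Euc n, ‖v‖ = 1 → ∀ δ : ℝ, δ < δ₀ →
      BddBelow {s : ℝ | WFBaux.F K φ v s ≤ δ} := fun v hv δ hδ =>
    ⟨-R, fun s hs => hlbt v hv δ hδ s hs⟩
  have hclosedt : ∀ v : Euc n, ‖v‖ = 1 → ∀ δ : ℝ,
      IsClosed {s : ℝ | WFBaux.F K φ v s ≤ δ} := fun v hv δ =>
    isClosed_le (hFcont1 v hv) continuous_const
  have htmem : ∀ v : Euc n, ‖v‖ = 1 → ∀ δ : ℝ, 0 ≤ δ → δ < δ₀ →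
      WFBaux.F K φ v (tf (δ, v)) ≤ δ := fun v hv δ h0 h1 =>
    (hclosedt v hv δ).csInf_mem ⟨_, hmemt v hv δ h0⟩ (hbddt v hv δ h1)
  have htle : ∀ v : Euc n, ‖v‖ = 1 → ∀ δ : ℝ, 0 ≤ δ → δ < δ₀ →
      tf (δ, v) ≤ suppFn K v := fun v hv δ h0 h1 =>
    csInf_le (hbddt v hv δ h1) (hmemt v hv δ h0)
  have hFtf : ∀ v : Euc n, ‖v‖ = 1 → ∀ δ : ℝ, 0 ≤ δ → δ < δ₀ →
      WFBaux.F K φ v (tf (δ, v)) = δ := by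
    intro v hv δ h0 h1
    refine le_antisymm (htmem v hv δ h0 h1) ?_
    by_contra hcon
    push_neg at hcon
    have hev : ∀ᶠ s in 𝓝 (tf (δ, v)), WFBaux.F K φ v s < δ :=
      ((hFcont1 v hv).continuousAt).eventually (eventually_lt_nhds hcon)
    obtain ⟨ε, hε, hev'⟩ := Metric.eventually_nhds_iff.1 hev
    have hdist : dist (tf (δ, v) - ε / 2) (tf (δ, v)) < ε := by
      rw [Real.dist_eq]
      rw [show tf (δ, v) - ε / 2 - tf (δ, v) = -(ε / 2) by ring, abs_neg,
        abs_of_pos (by linarith)]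
      linarith
    have hs : WFBaux.F K φ v (tf (δ, v) - ε / 2) < δ := hev' hdist
    have hle := csInf_le (hbddt v hv δ h1) (le_of_lt hs)
    simp only [htf] at hle
    linarith
  have htgtm : ∀ v : Euc n, ‖v‖ = 1 → ∀ δ : ℝ, 0 ≤ δ → δ < δ₀ →
      sInf ((fun x => ⟪v, x⟫) '' K) < tf (δ, v) := by
    intro v hv δ h0 h1
    by_contra hcon
    push_neg at hcon
    have h2 : WFBaux.F K φ v (tf (δ, v)) = δ₀ :=
      WFBaux.F_total (fun y hy => le_trans hcon (hinf_le v y hy))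
    rw [hFtf v hv δ h0 h1] at h2
    linarith
  -- Lipschitz continuity of the support function
  have hsup_lip : ∀ v w : Euc n, suppFn K v ≤ suppFn K w + R * ‖v - w‖ := by
    intro v w
    apply csSup_le (hKne.image _)
    rintro _ ⟨y, hy, rfl⟩
    have h1 : ⟪v, y⟫ = ⟪w, y⟫ + ⟪v - w, y⟫ := by rw [inner_sub_left]; ring
    have h2 : ⟪w, y⟫ ≤ suppFn K w := hsupp_le w y hy
    have h3 : ⟪v - w, y⟫ ≤ ‖v - w‖ * ‖y‖ := real_inner_le_norm _ _
    have h4 : ‖v - w‖ * ‖y‖ ≤ ‖v - w‖ * R :=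
      mul_le_mul_of_nonneg_left (hnormR y hy) (norm_nonneg _)
    have h5 : (fun x => ⟪v, x⟫) y = ⟪v, y⟫ := rfl
    rw [h5, h1]
    nlinarith
  have hsupc : Continuous (suppFn K) := by
    have hlip : LipschitzWith (Real.toNNReal R) (suppFn K) := by
      apply LipschitzWith.of_dist_le_mul
      intro v w
      rw [Real.dist_eq, Real.coe_toNNReal R hR0, dist_eq_norm, abs_sub_le_iff]
      constructor
      · linarith [hsup_lip v w]
      · have := hsup_lip w v
        rw [norm_sub_rev] at this
        linarith
    exact hlip.continuous
  have hFcontP : ∀ (s : ℝ) (p₁ : ℝ × Euc n), p₁.2 ≠ 0 →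
      ContinuousAt (fun p : ℝ × Euc n => WFBaux.F K φ p.2 s) p₁ := by
    intro s p₁ hne
    have h : ContinuousAt ((fun q : Euc n × ℝ => WFBaux.F K φ q.1 q.2) ∘
        (fun p : ℝ × Euc n => ((p.2, s) : Euc n × ℝ))) p₁ :=
      ContinuousAt.comp (WFBaux.F_cont hKcomp hφcont (p₀ := ((p₁.2 : Euc n), s)) hne)
        ((continuous_snd.prodMk continuous_const).continuousAt)
    exact h
  refine ⟨δ₀, hδ₀pos, tf, ?_, ?_, ?_, ?_⟩
  · -- continuity
    intro p₁ hp₁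
    rw [mem_prod] at hp₁
    obtain ⟨hδ₁, hv₁⟩ := hp₁
    have hv₁n : ‖p₁.2‖ = 1 := by rwa [mem_sphere_zero_iff_norm] at hv₁
    have hδ₁0 : 0 ≤ p₁.1 := hδ₁.1
    have hδ₁δ₀ : p₁.1 < δ₀ := hδ₁.2
    rw [ContinuousWithinAt]
    apply tendsto_order.2
    constructor
    · intro a ha
      set t₁ := tf p₁ with ht₁
      have ht₁p : tf p₁ = sInf {s : ℝ | WFBaux.F K φ p₁.2 s ≤ p₁.1} := rfl
      set s := max ((a + t₁) / 2) (t₁ - 1) with hsdef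
      have hs_lt : s < t₁ := max_lt (by linarith) (by linarith)
      have hs_gt : a < s := lt_max_iff.2 (Or.inl (by linarith))
      have hFs : p₁.1 < WFBaux.F K φ p₁.2 s := by
        by_contra h
        push_neg at h
        have := csInf_le (hbddt p₁.2 hv₁n p₁.1 hδ₁δ₀) h
        rw [← ht₁p, ← ht₁] at this
        linarith
      have hc : ContinuousAt (fun p : ℝ × Euc n => WFBaux.F K φ p.2 s - p.1) p₁ :=
        (hFcontP s p₁ (hvne p₁.2 hv₁n)).sub continuousAt_fst
      have hev : ∀ᶠ p : ℝ × Euc n in 𝓝 p₁, 0 < WFBaux.F K φ p.2 s - p.1 :=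
        hc.eventually (eventually_gt_nhds (by simpa using sub_pos.2 hFs))
      filter_upwards [hev.filter_mono nhdsWithin_le_nhds, self_mem_nhdsWithin] with p hp hpD
      rw [mem_prod] at hpD
      have hpv : ‖p.2‖ = 1 := by
        have := hpD.2; rwa [mem_sphere_zero_iff_norm] at this
      have hslb : s ≤ tf p := by
        refine le_csInf ⟨suppFn K p.2, hmemt p.2 hpv p.1 hpD.1.1⟩ ?_
        intro s' hs'
        by_contra hcon
        push_neg at hcon
        have hm := WFBaux.F_mono hKcomp hφcont hφpos p.2 hcon.le
        simp only [mem_setOf_eq] at hs'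
        linarith
      linarith
    · intro b hb
      by_cases hcase : suppFn K p₁.2 < b
      · have hev : ∀ᶠ p : ℝ × Euc n in 𝓝 p₁, suppFn K p.2 < b := by
          have hc : ContinuousAt (fun p : ℝ × Euc n => suppFn K p.2) p₁ :=
            hsupc.continuousAt.comp continuousAt_snd
          exact hc.eventually (eventually_lt_nhds hcase)
        filter_upwards [hev.filter_mono nhdsWithin_le_nhds, self_mem_nhdsWithin] with p hp hpD
        rw [mem_prod] at hpD
        have hpv : ‖p.2‖ = 1 := by
          have := hpD.2; rwa [mem_sphere_zero_iff_norm] at this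
        exact lt_of_le_of_lt (htle p.2 hpv p.1 hpD.1.1 hpD.1.2) hp
      · push_neg at hcase
        set t₁ := tf p₁ with ht₁
        set s := (t₁ + b) / 2 with hsdef
        have h1 : t₁ < s := by simp only [hsdef]; linarith
        have h2 : s < b := by simp only [hsdef]; linarith
        have hFt₁ : WFBaux.F K φ p₁.2 t₁ = p₁.1 := hFtf p₁.2 hv₁n p₁.1 hδ₁0 hδ₁δ₀
        have hFs : WFBaux.F K φ p₁.2 s < p₁.1 := by
          have hslab := WFBaux.F_slab_pos hKcomp hKconv hKint hφcont hφpos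
            (a := t₁) (b := s) (lt_of_lt_of_le hb hcase)
            (lt_trans (htgtm p₁.2 hv₁n p₁.1 hδ₁0 hδ₁δ₀) h1) h1
          rw [hFt₁] at hslab
          exact hslab
        have hc : ContinuousAt (fun p : ℝ × Euc n => p.1 - WFBaux.F K φ p.2 s) p₁ :=
          continuousAt_fst.sub (hFcontP s p₁ (hvne p₁.2 hv₁n))
        have hev : ∀ᶠ p : ℝ × Euc n in 𝓝 p₁, 0 < p.1 - WFBaux.F K φ p.2 s :=
          hc.eventually (eventually_gt_nhds (by simpa using sub_pos.2 hFs))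
        filter_upwards [hev.filter_mono nhdsWithin_le_nhds, self_mem_nhdsWithin] with p hp hpD
        rw [mem_prod] at hpD
        have hpv : ‖p.2‖ = 1 := by
          have := hpD.2; rwa [mem_sphere_zero_iff_norm] at this
        have hle : tf p ≤ s := csInf_le (hbddt p.2 hpv p.1 hpD.1.2)
          (by simp only [mem_setOf_eq]; linarith)
        linarith
  · -- t (0, v) = suppFn K v
    intro v hv
    have hvn : ‖v‖ = 1 := by rwa [mem_sphere_zero_iff_norm] at hv
    refine le_antisymm (htle v hvn 0 le_rfl hδ₀pos) ?_
    refine le_csInf ⟨_, hmemt v hvn 0 le_rfl⟩ ?_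
    intro s hs
    by_contra hcon
    push_neg at hcon
    have hpos : WFBaux.F K φ v (suppFn K v + 1) < WFBaux.F K φ v s :=
      WFBaux.F_slab_pos hKcomp hKconv hKint hφcont hφpos hcon
        (lt_of_le_of_lt (hm_le_h v) (by linarith)) (by linarith [hm_le_h v])
    rw [hF0 v hvn _ (by linarith)] at hpos
    simp only [mem_setOf_eq] at hs
    linarith
  · -- exact value
    intro δ hδ v hv
    have hvn : ‖v‖ = 1 := by rwa [mem_sphere_zero_iff_norm] at hv
    exact hFtf v hvn δ hδ.1.le hδ.2
  · -- wfloat equality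
    intro δ hδ
    unfold wfloat
    refine iInter₂_congr fun v hv => ?_
    have hvn : ‖v‖ = 1 := by rwa [mem_sphere_zero_iff_norm] at hv
    ext y
    simp only [mem_iInter, mem_setOf_eq]
    constructor
    · intro hy
      exact hy (tf (δ, v)) (le_of_eq (hFtf v hvn δ hδ.1.le hδ.2))
    · intro hy t' ht'
      exact le_trans hy (csInf_le (hbddt v hvn δ hδ.2) ht')
end
end
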